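/- Let c > 0. There exists a constant C > 0 (depending on c) such that for all t ≥ 0 and all x ∈ ℝ³, ∫₀^{t/2} ∫_{ℝ³} (1 + t − τ)^{−1} (1 + |x−y|²/(1+t−τ))^{−1} (1 + τ)^{−7/2} (1 + (|y| − c τ)²/(1+τ))^{−2} dy dτ ≤ C (1+t)^{−1} log(2+t). -/
import Mathlib


open MeasureTheory

open Real


noncomputable def I1 : ℝ := ∫ s : ℝ, (1 + |s|) ^ (-2 : ℝ)

lemma G_integrable : Integrable (fun s : ℝ => (1 + |s|) ^ (-2 : ℝ)) := by
  have := integrable_one_add_norm (E := ℝ) (μ := volume) (r := 2) (by norm_num)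
  simpa [Real.norm_eq_abs] using this

lemma I1_nonneg : 0 ≤ I1 :=
  integral_nonneg fun s => Real.rpow_nonneg (by positivity) _

lemma rpow_neg_two_eq (x : ℝ) (hx : 0 ≤ x) : x ^ (-2 : ℝ) = (x ^ 2)⁻¹ := by
  rw [show (-2 : ℝ) = -(2:ℕ) by norm_num, Real.rpow_neg hx, Real.rpow_natCast]

-- key radial pointwise bound
lemma L2 (σ a r : ℝ) (hσ : 1 ≤ σ) :
    r ^ 2 * (1 + (r - a) ^ 2 / σ) ^ (-2 : ℝ)
      ≤ 8 * (σ + a ^ 2) * (1 + |(r - a) / Real.sqrt σ|) ^ (-2 : ℝ) := by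
  have hσ0 : (0:ℝ) < σ := lt_of_lt_of_le one_pos hσ
  set u := |(r - a) / Real.sqrt σ| with hu
  have hu0 : 0 ≤ u := abs_nonneg _
  have hu2 : u ^ 2 = (r - a) ^ 2 / σ := by
    rw [sq_abs, div_pow, Real.sq_sqrt hσ0.le]
  rw [← hu2, rpow_neg_two_eq _ (by positivity), rpow_neg_two_eq _ (by positivity)]
  rw [← div_eq_mul_inv, ← div_eq_mul_inv, div_le_div_iff₀ (by positivity) (by positivity)]
  have hr2 : r ^ 2 ≤ 2 * σ * u ^ 2 + 2 * a ^ 2 := by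
    have : σ * u ^ 2 = (r - a) ^ 2 := by rw [hu2]; field_simp
    nlinarith [sq_nonneg (r - 2 * a)]
  nlinarith [sq_nonneg (1 - u), sq_nonneg u, sq_nonneg (u^2 - u), sq_nonneg (u*a), sq_nonneg (u^2*a), mul_nonneg (mul_nonneg hu0 hu0) hσ0.le, sq_nonneg (u^2 - 1), mul_nonneg (sq_nonneg (u - 1)) hσ0.le, mul_nonneg (sq_nonneg (u^2 - u)) hσ0.le, mul_nonneg (sq_nonneg (u - 1)) (sq_nonneg a)]

-- crude pointwise bound for integrability
lemma L3 (σ a r : ℝ) (hσ : 1 ≤ σ) (ha : 0 ≤ a) (hr : 0 ≤ r) :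
    (1 + (r - a) ^ 2 / σ) ^ (-2 : ℝ) ≤ 16 * (σ + a ^ 2) ^ 2 * (1 + r) ^ (-4 : ℝ) := by
  have hσ0 : (0:ℝ) < σ := lt_of_lt_of_le one_pos hσ
  have h4 : (1 + r) ^ (-4 : ℝ) = ((1 + r) ^ 4)⁻¹ := by
    rw [show (-4 : ℝ) = -(4:ℕ) by norm_num, Real.rpow_neg (by positivity), Real.rpow_natCast]
  rw [rpow_neg_two_eq _ (by positivity), h4, ← div_eq_mul_inv, inv_eq_one_div,
    div_le_div_iff₀ (by positivity) (by positivity)]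
  have hq : σ * ((r - a) ^ 2 / σ) = (r - a) ^ 2 := by field_simp
  set q := (r - a) ^ 2 / σ with hqdef
  have hq0 : 0 ≤ q := by positivity
  have hr2 : r ^ 2 ≤ 2 * (σ * q) + 2 * a ^ 2 := by nlinarith [sq_nonneg (r - 2 * a), hq]
  have h1 : (1 + r) ^ 2 ≤ 4 * (σ + a ^ 2) * (1 + q) := by
    nlinarith [hr2, sq_nonneg (r - 1), mul_nonneg (sq_nonneg a) hq0, mul_nonneg (sub_nonneg.2 hσ) hq0]
  calc 1 * (1 + r) ^ 4 = ((1 + r) ^ 2) ^ 2 := by ring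
    _ ≤ (4 * (σ + a ^ 2) * (1 + q)) ^ 2 := by
        apply pow_le_pow_left₀ (by positivity) h1
    _ = 16 * (σ + a ^ 2) ^ 2 * (1 + q) ^ 2 := by ring

-- integrability over R^3
lemma L4 (σ a : ℝ) (hσ : 1 ≤ σ) (ha : 0 ≤ a) :
    Integrable (fun y : EuclideanSpace ℝ (Fin 3) => (1 + (‖y‖ - a) ^ 2 / σ) ^ (-2 : ℝ)) := by
  have hσ0 : (0:ℝ) < σ := lt_of_lt_of_le one_pos hσ
  have hmaj : Integrable (fun y : EuclideanSpace ℝ (Fin 3) =>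
      16 * (σ + a ^ 2) ^ 2 * (1 + ‖y‖) ^ (-4 : ℝ)) := by
    exact (integrable_one_add_norm (E := EuclideanSpace ℝ (Fin 3)) (μ := volume) (r := 4)
      (by simp [finrank_euclideanSpace_fin]; norm_num)).const_mul _
  refine hmaj.mono' ?_ (Filter.Eventually.of_forall fun y => ?_)
  · apply Continuous.aestronglyMeasurable
    apply Continuous.rpow_const
    · fun_prop
    · intro y; left; positivity
  · rw [Real.norm_eq_abs, abs_of_nonneg (Real.rpow_nonneg (by positivity) _)]
    exact L3 σ a ‖y‖ hσ ha (norm_nonneg y)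

noncomputable def B3 : ℝ := (volume (Metric.ball (0 : EuclideanSpace ℝ (Fin 3)) 1)).toReal

lemma B3_nonneg : 0 ≤ B3 := ENNReal.toReal_nonneg

lemma L5 (σ a : ℝ) (hσ : 1 ≤ σ) (ha : 0 ≤ a) :
    (∫ y : EuclideanSpace ℝ (Fin 3), (1 + (‖y‖ - a) ^ 2 / σ) ^ (-2 : ℝ))
      ≤ 24 * B3 * I1 * ((σ + a ^ 2) * Real.sqrt σ) := by
  have hσ0 : (0:ℝ) < σ := lt_of_lt_of_le one_pos hσ
  have hs0 : (0:ℝ) < Real.sqrt σ := Real.sqrt_pos.2 hσ0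
  have hpolar := MeasureTheory.integral_fun_norm_addHaar
    (volume : Measure (EuclideanSpace ℝ (Fin 3)))
    (fun r : ℝ => (1 + (r - a) ^ 2 / σ) ^ (-2 : ℝ))
  simp only [finrank_euclideanSpace_fin, smul_eq_mul, nsmul_eq_mul, Nat.cast_ofNat] at hpolar
  rw [hpolar]
  -- the majorant on the half line
  set h : ℝ → ℝ := fun r => 8 * (σ + a ^ 2) * ((1 + |(r - a) / Real.sqrt σ|) ^ (-2 : ℝ)) with hh
  have hGint : Integrable (fun r : ℝ => (1 + |(r - a) / Real.sqrt σ|) ^ (-2 : ℝ)) := by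
    have h1 : Integrable (fun r : ℝ => (1 + |r / Real.sqrt σ|) ^ (-2 : ℝ)) :=
      G_integrable.comp_div (ne_of_gt hs0)
    exact h1.comp_sub_right a
  have hhint : Integrable h := hGint.const_mul _
  have hIoi : (∫ r in Set.Ioi (0:ℝ), r ^ 2 * (1 + (r - a) ^ 2 / σ) ^ (-2 : ℝ))
      ≤ ∫ r in Set.Ioi (0:ℝ), h r := by
    refine integral_mono_of_nonneg ?_ (hhint.integrableOn) ?_
    · exact Filter.Eventually.of_forall fun r => by positivity
    · exact Filter.Eventually.of_forall fun r => L2 σ a r hσ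
  have hIoi2 : (∫ r in Set.Ioi (0:ℝ), h r) ≤ ∫ r : ℝ, h r :=
    setIntegral_le_integral hhint (Filter.Eventually.of_forall fun r => by positivity)
  have hval : (∫ r : ℝ, h r) = 8 * (σ + a ^ 2) * (Real.sqrt σ * I1) := by
    rw [hh]
    rw [MeasureTheory.integral_const_mul]
    congr 1
    have h2 : (∫ r : ℝ, (1 + |(r - a) / Real.sqrt σ|) ^ (-2 : ℝ))
        = ∫ r : ℝ, (1 + |r / Real.sqrt σ|) ^ (-2 : ℝ) :=
      integral_sub_right_eq_self (fun r : ℝ => (1 + |r / Real.sqrt σ|) ^ (-2 : ℝ)) a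
    rw [h2, MeasureTheory.Measure.integral_comp_div (fun s : ℝ => (1 + |s|) ^ (-2 : ℝ)) (Real.sqrt σ),
      abs_of_pos hs0, smul_eq_mul, I1]
  have hfin : (∫ r in Set.Ioi (0:ℝ), r ^ 2 * (1 + (r - a) ^ 2 / σ) ^ (-2 : ℝ))
      ≤ 8 * (σ + a ^ 2) * (Real.sqrt σ * I1) := by
    calc _ ≤ ∫ r in Set.Ioi (0:ℝ), h r := hIoi
      _ ≤ ∫ r : ℝ, h r := hIoi2
      _ = _ := hval
  calc (3:ℝ) * (B3 * ∫ r in Set.Ioi (0:ℝ), r ^ 2 * (1 + (r - a) ^ 2 / σ) ^ (-2 : ℝ))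
      ≤ 3 * (B3 * (8 * (σ + a ^ 2) * (Real.sqrt σ * I1))) := by
        apply mul_le_mul_of_nonneg_left _ (by norm_num)
        exact mul_le_mul_of_nonneg_left hfin B3_nonneg
    _ = 24 * B3 * I1 * ((σ + a ^ 2) * Real.sqrt σ) := by ring

/-- Estimate (1.35)/(5.8) for 𝒩₁₂: the naive convolution of the Riesz wave-IV
with a nonlinear Huygens wave of weight (1+τ)^{−7/2} incurs a logarithmic loss. -/
theorem stmt_19 (c : ℝ) (hc : 0 < c) :
    ∃ C : ℝ, 0 < C ∧ ∀ t : ℝ, 0 ≤ t → ∀ x : EuclideanSpace ℝ (Fin 3),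
      (∫ τ in Set.Icc (0 : ℝ) (t / 2), ∫ y : EuclideanSpace ℝ (Fin 3),
          (1 + t - τ) ^ (-1 : ℝ) * (1 + ‖x - y‖ ^ 2 / (1 + t - τ)) ^ (-1 : ℝ)
            * (1 + τ) ^ (-(7 / 2) : ℝ)
            * (1 + (‖y‖ - c * τ) ^ 2 / (1 + τ)) ^ (-2 : ℝ))
        ≤ C * (1 + t) ^ (-1 : ℝ) * Real.log (2 + t) := by
  set K : ℝ := 24 * B3 * I1 * (1 + c ^ 2) with hKdef
  have hK : 0 ≤ K := by
    apply mul_nonneg _ (by positivity)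
    exact mul_nonneg (mul_nonneg (by norm_num) B3_nonneg) I1_nonneg
  refine ⟨2 * K + 1, by linarith, fun t ht x => ?_⟩
  have ht2 : (0:ℝ) ≤ t / 2 := by linarith
  -- the pointwise (in τ) bound on the inner integral
  have houter : ∀ τ ∈ Set.Icc (0:ℝ) (t/2),
      (∫ y : EuclideanSpace ℝ (Fin 3),
          (1 + t - τ) ^ (-1 : ℝ) * (1 + ‖x - y‖ ^ 2 / (1 + t - τ)) ^ (-1 : ℝ)
            * (1 + τ) ^ (-(7 / 2) : ℝ)
            * (1 + (‖y‖ - c * τ) ^ 2 / (1 + τ)) ^ (-2 : ℝ))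
        ≤ 2 * K * (1 + t) ^ (-1 : ℝ) * (1 + τ)⁻¹ := by
    rintro τ ⟨hτ0, hτt⟩
    have hσ' : (0:ℝ) < 1 + t - τ := by linarith
    have hστ : (0:ℝ) < 1 + τ := by linarith
    have hgint := L4 (1 + τ) (c * τ) (by linarith) (by positivity)
    have hinner : (∫ y : EuclideanSpace ℝ (Fin 3),
          (1 + t - τ) ^ (-1 : ℝ) * (1 + ‖x - y‖ ^ 2 / (1 + t - τ)) ^ (-1 : ℝ)
            * (1 + τ) ^ (-(7 / 2) : ℝ)
            * (1 + (‖y‖ - c * τ) ^ 2 / (1 + τ)) ^ (-2 : ℝ))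
        ≤ ((1 + t - τ) ^ (-1 : ℝ) * 1 * (1 + τ) ^ (-(7 / 2) : ℝ)) *
            ∫ y : EuclideanSpace ℝ (Fin 3), (1 + (‖y‖ - c * τ) ^ 2 / (1 + τ)) ^ (-2 : ℝ) := by
      rw [← MeasureTheory.integral_const_mul]
      refine integral_mono_of_nonneg (Filter.Eventually.of_forall fun y => ?_)
        (hgint.const_mul _) (Filter.Eventually.of_forall fun y => ?_)
      · have h1 : (0:ℝ) ≤ (1 + t - τ) ^ (-1 : ℝ) := Real.rpow_nonneg hσ'.le _
        have h2 : (0:ℝ) ≤ (1 + ‖x - y‖ ^ 2 / (1 + t - τ)) ^ (-1 : ℝ) :=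
          Real.rpow_nonneg (by positivity) _
        have h3 : (0:ℝ) ≤ (1 + τ) ^ (-(7 / 2) : ℝ) := Real.rpow_nonneg hστ.le _
        have h4 : (0:ℝ) ≤ (1 + (‖y‖ - c * τ) ^ 2 / (1 + τ)) ^ (-2 : ℝ) :=
          Real.rpow_nonneg (by positivity) _
        exact mul_nonneg (mul_nonneg (mul_nonneg h1 h2) h3) h4
      · have hb : (1 + ‖x - y‖ ^ 2 / (1 + t - τ)) ^ (-1 : ℝ) ≤ 1 := by
          have hbase : (1:ℝ) ≤ 1 + ‖x - y‖ ^ 2 / (1 + t - τ) := by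
            have := div_nonneg (sq_nonneg ‖x - y‖) hσ'.le; linarith
          calc (1 + ‖x - y‖ ^ 2 / (1 + t - τ)) ^ (-1 : ℝ)
              ≤ (1:ℝ) ^ (-1 : ℝ) :=
                Real.rpow_le_rpow_of_nonpos one_pos hbase (by norm_num)
            _ = 1 := Real.one_rpow _
        have h1 : (0:ℝ) ≤ (1 + t - τ) ^ (-1 : ℝ) := Real.rpow_nonneg hσ'.le _
        have h3 : (0:ℝ) ≤ (1 + τ) ^ (-(7 / 2) : ℝ) := Real.rpow_nonneg hστ.le _
        have h4 : (0:ℝ) ≤ (1 + (‖y‖ - c * τ) ^ 2 / (1 + τ)) ^ (-2 : ℝ) :=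
          Real.rpow_nonneg (by positivity) _
        apply mul_le_mul_of_nonneg_right _ h4
        apply mul_le_mul_of_nonneg_right _ h3
        exact mul_le_mul_of_nonneg_left hb h1
    have hL5 := L5 (1 + τ) (c * τ) (by linarith) (by positivity)
    have hr0 : (0:ℝ) ≤ (1 + t - τ) ^ (-1 : ℝ) * 1 * (1 + τ) ^ (-(7 / 2) : ℝ) :=
      mul_nonneg (mul_nonneg (Real.rpow_nonneg hσ'.le _) zero_le_one)
        (Real.rpow_nonneg hστ.le _)
    have hinv : (1 + t - τ) ^ (-1 : ℝ) ≤ 2 * (1 + t) ^ (-1 : ℝ) := by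
      rw [Real.rpow_neg_one, Real.rpow_neg_one]
      have h1 : (1 + t - τ)⁻¹ ≤ ((1 + t) / 2)⁻¹ := by
        apply inv_anti₀ (by positivity)
        linarith
      have h2 : ((1 + t) / 2)⁻¹ = 2 * (1 + t)⁻¹ := by
        rw [inv_div, div_eq_mul_inv]
      linarith [h1, h2.le]
    have hA : (1 + τ) + (c * τ) ^ 2 ≤ (1 + c ^ 2) * (1 + τ) ^ 2 := by
      nlinarith [mul_nonneg hτ0 hτ0, sq_nonneg c, mul_nonneg (sq_nonneg c) hτ0,
        mul_nonneg (mul_nonneg (sq_nonneg c) hτ0) hτ0]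
    have hexp : (1 + τ) ^ (-(7 / 2) : ℝ) * ((1 + τ) ^ 2 * Real.sqrt (1 + τ)) = (1 + τ)⁻¹ := by
      rw [Real.sqrt_eq_rpow, ← Real.rpow_natCast (1 + τ) 2, ← Real.rpow_add hστ,
        ← Real.rpow_add hστ, show (-(7 / 2) : ℝ) + (((2:ℕ):ℝ) + 1 / 2) = -1 by norm_num,
        Real.rpow_neg_one]
    have hfoll : (1 + τ) ^ (-(7 / 2) : ℝ) * (24 * B3 * I1 * (((1 + τ) + (c * τ) ^ 2)
          * Real.sqrt (1 + τ))) ≤ K * (1 + τ)⁻¹ := by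
      have step1 : ((1 + τ) + (c * τ) ^ 2) * Real.sqrt (1 + τ)
          ≤ ((1 + c ^ 2) * (1 + τ) ^ 2) * Real.sqrt (1 + τ) :=
        mul_le_mul_of_nonneg_right hA (Real.sqrt_nonneg _)
      have h24 : (0:ℝ) ≤ 24 * B3 * I1 :=
        mul_nonneg (mul_nonneg (by norm_num) B3_nonneg) I1_nonneg
      calc (1 + τ) ^ (-(7 / 2) : ℝ) * (24 * B3 * I1 * (((1 + τ) + (c * τ) ^ 2)
              * Real.sqrt (1 + τ)))
          ≤ (1 + τ) ^ (-(7 / 2) : ℝ) * (24 * B3 * I1 * (((1 + c ^ 2) * (1 + τ) ^ 2)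
              * Real.sqrt (1 + τ))) := by
            apply mul_le_mul_of_nonneg_left _ (Real.rpow_nonneg hστ.le _)
            exact mul_le_mul_of_nonneg_left step1 h24
        _ = (24 * B3 * I1 * (1 + c ^ 2)) * ((1 + τ) ^ (-(7 / 2) : ℝ)
              * ((1 + τ) ^ 2 * Real.sqrt (1 + τ))) := by ring
        _ = K * (1 + τ)⁻¹ := by rw [hexp, hKdef]
    calc (∫ y : EuclideanSpace ℝ (Fin 3),
          (1 + t - τ) ^ (-1 : ℝ) * (1 + ‖x - y‖ ^ 2 / (1 + t - τ)) ^ (-1 : ℝ)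
            * (1 + τ) ^ (-(7 / 2) : ℝ)
            * (1 + (‖y‖ - c * τ) ^ 2 / (1 + τ)) ^ (-2 : ℝ))
        ≤ ((1 + t - τ) ^ (-1 : ℝ) * 1 * (1 + τ) ^ (-(7 / 2) : ℝ)) *
            ∫ y : EuclideanSpace ℝ (Fin 3), (1 + (‖y‖ - c * τ) ^ 2 / (1 + τ)) ^ (-2 : ℝ) :=
          hinner
      _ ≤ ((1 + t - τ) ^ (-1 : ℝ) * 1 * (1 + τ) ^ (-(7 / 2) : ℝ)) *
            (24 * B3 * I1 * (((1 + τ) + (c * τ) ^ 2) * Real.sqrt (1 + τ))) :=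
          mul_le_mul_of_nonneg_left hL5 hr0
      _ = (1 + t - τ) ^ (-1 : ℝ) * ((1 + τ) ^ (-(7 / 2) : ℝ)
            * (24 * B3 * I1 * (((1 + τ) + (c * τ) ^ 2) * Real.sqrt (1 + τ)))) := by ring
      _ ≤ (2 * (1 + t) ^ (-1 : ℝ)) * (K * (1 + τ)⁻¹) := by
          apply mul_le_mul hinv hfoll _ (by positivity)
          apply mul_nonneg (Real.rpow_nonneg hστ.le _)
          apply mul_nonneg (mul_nonneg (mul_nonneg (by norm_num) B3_nonneg) I1_nonneg)
          apply mul_nonneg _ (Real.sqrt_nonneg _)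
          positivity
      _ = 2 * K * (1 + t) ^ (-1 : ℝ) * (1 + τ)⁻¹ := by ring
  -- integrate the bound in τ
  have hGint : IntegrableOn (fun τ : ℝ => 2 * K * (1 + t) ^ (-1 : ℝ) * (1 + τ)⁻¹)
      (Set.Icc (0:ℝ) (t/2)) := by
    apply ContinuousOn.integrableOn_compact isCompact_Icc
    apply ContinuousOn.mul continuousOn_const
    apply ContinuousOn.inv₀ (by fun_prop)
    rintro τ ⟨hτ0, -⟩
    positivity
  have hstep : (∫ τ in Set.Icc (0 : ℝ) (t / 2), ∫ y : EuclideanSpace ℝ (Fin 3),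
          (1 + t - τ) ^ (-1 : ℝ) * (1 + ‖x - y‖ ^ 2 / (1 + t - τ)) ^ (-1 : ℝ)
            * (1 + τ) ^ (-(7 / 2) : ℝ)
            * (1 + (‖y‖ - c * τ) ^ 2 / (1 + τ)) ^ (-2 : ℝ))
      ≤ ∫ τ in Set.Icc (0 : ℝ) (t / 2), 2 * K * (1 + t) ^ (-1 : ℝ) * (1 + τ)⁻¹ := by
    refine integral_mono_of_nonneg ?_ hGint ?_
    · filter_upwards [ae_restrict_mem measurableSet_Icc] with τ hτ
      obtain ⟨hτ0, hτt⟩ := hτ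
      have hσ' : (0:ℝ) < 1 + t - τ := by linarith
      have hστ : (0:ℝ) < 1 + τ := by linarith
      apply integral_nonneg
      intro y
      have h1 : (0:ℝ) ≤ (1 + t - τ) ^ (-1 : ℝ) := Real.rpow_nonneg hσ'.le _
      have h2 : (0:ℝ) ≤ (1 + ‖x - y‖ ^ 2 / (1 + t - τ)) ^ (-1 : ℝ) :=
        Real.rpow_nonneg (by positivity) _
      have h3 : (0:ℝ) ≤ (1 + τ) ^ (-(7 / 2) : ℝ) := Real.rpow_nonneg hστ.le _
      have h4 : (0:ℝ) ≤ (1 + (‖y‖ - c * τ) ^ 2 / (1 + τ)) ^ (-2 : ℝ) :=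
        Real.rpow_nonneg (by positivity) _
      exact mul_nonneg (mul_nonneg (mul_nonneg h1 h2) h3) h4
    · filter_upwards [ae_restrict_mem measurableSet_Icc] with τ hτ
      exact houter τ hτ
  have hlog : (∫ τ in Set.Icc (0:ℝ) (t/2), (1 + τ)⁻¹) = Real.log (1 + t / 2) := by
    rw [MeasureTheory.integral_Icc_eq_integral_Ioc,
      ← intervalIntegral.integral_of_le ht2]
    have h0 : (0:ℝ) ∉ Set.uIcc (1:ℝ) (1 + t / 2) := by
      rw [Set.uIcc_of_le (by linarith)]
      rintro ⟨h1, -⟩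
      linarith
    calc (∫ τ in (0:ℝ)..(t/2), (1 + τ)⁻¹)
        = ∫ u in (1:ℝ)..(1 + t/2), u⁻¹ := by
          simpa using intervalIntegral.integral_comp_add_left
            (a := (0:ℝ)) (b := t/2) (fun u : ℝ => u⁻¹) 1
      _ = Real.log ((1 + t/2) / 1) := integral_inv h0
      _ = Real.log (1 + t/2) := by rw [div_one]
  calc (∫ τ in Set.Icc (0 : ℝ) (t / 2), ∫ y : EuclideanSpace ℝ (Fin 3),
          (1 + t - τ) ^ (-1 : ℝ) * (1 + ‖x - y‖ ^ 2 / (1 + t - τ)) ^ (-1 : ℝ)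
            * (1 + τ) ^ (-(7 / 2) : ℝ)
            * (1 + (‖y‖ - c * τ) ^ 2 / (1 + τ)) ^ (-2 : ℝ))
      ≤ ∫ τ in Set.Icc (0 : ℝ) (t / 2), 2 * K * (1 + t) ^ (-1 : ℝ) * (1 + τ)⁻¹ := hstep
    _ = 2 * K * (1 + t) ^ (-1 : ℝ) * Real.log (1 + t / 2) := by
        rw [MeasureTheory.integral_const_mul, hlog]
    _ ≤ 2 * K * (1 + t) ^ (-1 : ℝ) * Real.log (2 + t) := by
        apply mul_le_mul_of_nonneg_left _
          (mul_nonneg (by linarith) (Real.rpow_nonneg (by linarith) _))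
        apply Real.log_le_log (by linarith)
        linarith
    _ ≤ (2 * K + 1) * (1 + t) ^ (-1 : ℝ) * Real.log (2 + t) := by
        apply mul_le_mul_of_nonneg_right _ (Real.log_nonneg (by linarith))
        apply mul_le_mul_of_nonneg_right (by linarith) (Real.rpow_nonneg (by linarith) _)
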